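/- arXiv:2104.07194 — 7 statements merged into one kernel-verified Lean document; each statement's English description precedes it below -/
import Mathlib

section
/- Fix q ∈ (0,1/2) and p̄ > 0. The function f(x) = x · h2((p̄/x) ⋆ q) is strictly increasing on the interval (2p̄, ∞) (the set of x for which p̄/x < 1/2). -/
/-- Binary entropy (base 2), with the conventions `h2 0 = h2 1 = 0`
(automatic since `Real.log 0 = 0`). -/
noncomputable def h2 (y : ℝ) : ℝ := -(y * Real.logb 2 y) - (1 - y) * Real.logb 2 (1 - y)

/-- For `x, y ∈ [0,1]`, `x ⋆ y = x(1−y) + y(1−x)`. -/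
noncomputable def bstar (x y : ℝ) : ℝ := x * (1 - y) + y * (1 - x)

open Real Set

lemma h2_eq (y : ℝ) : h2 y = Real.binEntropy y / Real.log 2 := by
  simp [h2, Real.binEntropy, Real.logb, Real.log_inv]
  ring

/-- Key inequality from strict concavity (via MVT): the tangent line at `g`
lies strictly above the value at `q`. -/
lemma key_ineq {q g : ℝ} (hq0 : 0 < q) (hqg : q < g) (hg1 : g < 1) :
    Real.binEntropy q < Real.binEntropy g - (g - q) * (Real.log (1 - g) - Real.log g) := by
  obtain ⟨c, hc, hderiv⟩ := exists_deriv_eq_slope Real.binEntropy hqg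
    Real.binEntropy_continuous.continuousOn
    (fun p hp => (Real.differentiableAt_binEntropy (by nlinarith [hp.1] : p ≠ 0)
      (by nlinarith [hp.2] : p ≠ 1)).differentiableWithinAt)
  rw [Real.deriv_binEntropy] at hderiv
  have hc0 : 0 < c := hq0.trans hc.1
  have hcg : c < g := hc.2
  have h1 : Real.log c < Real.log g := Real.log_lt_log hc0 hcg
  have h2' : Real.log (1 - g) < Real.log (1 - c) :=
    Real.log_lt_log (by linarith) (by linarith)
  have hpos : (0:ℝ) < g - q := by linarith
  rw [eq_div_iff (by linarith : g - q ≠ 0)] at hderiv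
  nlinarith [mul_pos hpos (by linarith : (0:ℝ) < (Real.log (1 - c) - Real.log c) - (Real.log (1 - g) - Real.log g))]

lemma strictMonoOn_aux (q pbar : ℝ) (hq : q ∈ Set.Ioo (0 : ℝ) (1/2))
    (hpbar : 0 < pbar) :
    StrictMonoOn (fun x : ℝ => x * Real.binEntropy (bstar (pbar / x) q)) (Set.Ioi (2 * pbar)) := by
  obtain ⟨hq0, hq2⟩ := hq
  have hbs : ∀ x : ℝ, bstar (pbar / x) q = q + (1 - 2*q) * (pbar / x) := by
    intro x; simp [bstar]; ring
  apply strictMonoOn_of_deriv_pos (convex_Ioi _)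
  · -- continuity
    apply ContinuousOn.mul continuousOn_id
    apply Real.binEntropy_continuous.comp_continuousOn
    intro x hx
    have hx0 : (0:ℝ) < x := lt_trans (by positivity) hx
    exact ((continuousOn_const.div continuousOn_id (fun y hy => (lt_trans (by positivity) hy).ne')).mul
      continuousOn_const |>.add (continuousOn_const.mul ((continuousOn_const.sub
      (continuousOn_const.div continuousOn_id (fun y hy => (lt_trans (by positivity) hy).ne')))))) x hx
  · intro x hx
    rw [interior_Ioi] at hx
    have hx2p : 2 * pbar < x := hx
    have hx0 : (0:ℝ) < x := lt_trans (by positivity) hx2p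
    set t : ℝ := pbar / x with ht
    have ht0 : 0 < t := by positivity
    have ht2 : t < 1/2 := by
      rw [ht, div_lt_iff₀ hx0]; linarith
    set g : ℝ := bstar t q with hg
    have hgval : g = q + (1 - 2*q) * t := hbs x
    have hqg : q < g := by
      rw [hgval]; nlinarith
    have hg2 : g < 1/2 := by rw [hgval]; nlinarith
    have hg1 : g < 1 := by linarith
    have hg0 : 0 < g := lt_trans hq0 hqg
    -- derivative of inner function pbar / x
    have hd1 : HasDerivAt (fun y : ℝ => pbar / y) (-(pbar / x^2)) x := by
      have h' := (hasDerivAt_inv hx0.ne').const_mul pbar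
      have hfe : (fun y : ℝ => pbar / y) = fun y : ℝ => pbar * y⁻¹ :=
        funext fun y => div_eq_mul_inv _ _
      rw [hfe]
      have e : -(pbar / x^2) = pbar * -(x^2)⁻¹ := by ring
      rw [e]; exact h'
    have hd2 : HasDerivAt (fun y : ℝ => bstar (pbar / y) q)
        ((1 - 2*q) * (-(pbar / x^2))) x := by
      have h' : HasDerivAt (fun y : ℝ => q + (1 - 2*q) * (pbar / y))
          ((1 - 2*q) * (-(pbar / x^2))) x := (hd1.const_mul _).const_add q
      have hfe : (fun y : ℝ => bstar (pbar / y) q) = fun y : ℝ => q + (1 - 2*q) * (pbar / y) :=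
        funext hbs
      rw [hfe]; exact h'
    have hd3 : HasDerivAt (fun y : ℝ => Real.binEntropy (bstar (pbar / y) q))
        ((Real.log (1 - g) - Real.log g) * ((1 - 2*q) * (-(pbar / x^2)))) x :=
      by
        have e := Real.hasDerivAt_binEntropy (p := g) hg0.ne' hg1.ne
        have := e.comp x hd2
        exact this
    have hd4 : HasDerivAt (fun y : ℝ => y * Real.binEntropy (bstar (pbar / y) q))
        (Real.binEntropy g + x * ((Real.log (1 - g) - Real.log g) * ((1 - 2*q) * (-(pbar / x^2))))) x := by
      have h' := (hasDerivAt_id x).mul hd3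
      simp only [id_eq, one_mul] at h'
      exact h'
    rw [hd4.deriv]
    have hkey := key_ineq hq0 hqg hg1
    have hbpos : 0 < Real.binEntropy q := Real.binEntropy_pos hq0 (by linarith)
    have hx2 : x * (pbar / x^2) = pbar / x := by field_simp
    have hgq : g - q = (1 - 2*q) * (pbar / x) := by rw [hgval]; ring
    have : x * ((Real.log (1 - g) - Real.log g) * ((1 - 2*q) * (-(pbar / x^2))))
        = -((g - q) * (Real.log (1 - g) - Real.log g)) := by
      rw [hgq]
      field_simp
    rw [this]
    linarith

/-- For `q ∈ (0,1/2)` and `p̄ > 0`, the function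
`f(x) = x · h2((p̄/x) ⋆ q)` is strictly increasing on `(2p̄, ∞)`. -/
theorem strictMonoOn_mul_h2_star (q pbar : ℝ) (hq : q ∈ Set.Ioo (0 : ℝ) (1/2))
    (hpbar : 0 < pbar) :
    StrictMonoOn (fun x : ℝ => x * h2 (bstar (pbar / x) q)) (Set.Ioi (2 * pbar)) := by
  have h := strictMonoOn_aux q pbar hq hpbar
  intro a ha b hb hab
  have := h ha hb hab
  simp only [h2_eq]
  rw [mul_div_assoc', mul_div_assoc']
  have hlog : (0:ℝ) < Real.log 2 := Real.log_pos one_lt_two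
  exact div_lt_div_of_pos_right this hlog
end

section
/- Fix q ∈ (0,1/2) and p̄ > 0, and let f(x) = x · h2((p̄/x) ⋆ q). For every x > 2p̄, f is differentiable at x with derivative f'(x) = h2((p̄/x) ⋆ q) + (2q−1)·(p̄/x)·log₂((1 − (p̄/x) ⋆ q)/((p̄/x) ⋆ q)), and this derivative is strictly positive. -/
lemma mul_log_hasDerivAt {y : ℝ} (hy : y ≠ 0) :
    HasDerivAt (fun t : ℝ => t * Real.log t) (Real.log y + 1) y := by
  have := (hasDerivAt_id y).mul (Real.hasDerivAt_log hy)
  refine this.congr_deriv ?_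
  simp only [id, one_mul, mul_inv_cancel₀ hy]

lemma h2_hasDerivAt {y : ℝ} (h0 : 0 < y) (h1 : y < 1) :
    HasDerivAt h2 (Real.logb 2 ((1 - y) / y)) y := by
  have hy : y ≠ 0 := ne_of_gt h0
  have h1y : (1 : ℝ) - y ≠ 0 := by intro h; nlinarith [sub_eq_zero.mp h]
  have l2 : Real.log 2 ≠ 0 := by
    have := Real.log_pos (by norm_num : (1:ℝ) < 2); linarith
  have Dsub : HasDerivAt (fun t : ℝ => 1 - t) (-1 : ℝ) y := by
    exact ((hasDerivAt_const y (1:ℝ)).sub (hasDerivAt_id y)).congr_deriv (by norm_num)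
  have D2 : HasDerivAt (fun t : ℝ => (1 - t) * Real.log (1 - t))
      ((Real.log (1 - y) + 1) * (-1)) y :=
    (mul_log_hasDerivAt h1y).comp y Dsub
  have D : HasDerivAt (fun t : ℝ =>
      (-(t * Real.log t) - (1 - t) * Real.log (1 - t)) / Real.log 2)
      ((-(Real.log y + 1) - (Real.log (1 - y) + 1) * (-1)) / Real.log 2) y :=
    (((mul_log_hasDerivAt hy).neg.sub D2)).div_const _
  have heq : HasDerivAt h2
      ((-(Real.log y + 1) - (Real.log (1 - y) + 1) * (-1)) / Real.log 2) y := by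
    convert D using 2 with t
    simp [h2, Real.logb]
    ring
  convert heq using 1
  rw [Real.logb, Real.log_div h1y hy]
  ring

/-- For `q ∈ (0,1/2)`, `p̄ > 0` and `x > 2p̄`, the function
`f(x) = x · h2((p̄/x) ⋆ q)` is differentiable at `x` with derivative
`h2((p̄/x) ⋆ q) + (2q−1)·(p̄/x)·log₂((1 − (p̄/x) ⋆ q)/((p̄/x) ⋆ q))`,
and this derivative is strictly positive. -/
theorem hasDerivAt_mul_h2_star (q pbar x : ℝ) (hq : q ∈ Set.Ioo (0 : ℝ) (1/2))
    (hpbar : 0 < pbar) (hx : 2 * pbar < x) :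
    HasDerivAt (fun x : ℝ => x * h2 (bstar (pbar / x) q))
      (h2 (bstar (pbar / x) q) +
        (2 * q - 1) * (pbar / x) *
          Real.logb 2 ((1 - bstar (pbar / x) q) / bstar (pbar / x) q)) x ∧
    0 < h2 (bstar (pbar / x) q) +
        (2 * q - 1) * (pbar / x) *
          Real.logb 2 ((1 - bstar (pbar / x) q) / bstar (pbar / x) q) := by
  obtain ⟨hq0, hq2⟩ := hq
  have hx0 : 0 < x := by linarith
  have hxne : x ≠ 0 := ne_of_gt hx0
  set p : ℝ := pbar / x with hp
  have hp0 : 0 < p := div_pos hpbar hx0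
  have hp2 : p < 1/2 := by rw [hp, div_lt_iff₀ hx0]; linarith
  set s : ℝ := bstar p q with hs
  have hsval : s = p * (1 - q) + q * (1 - p) := rfl
  have hs0 : 0 < s := by rw [hsval]; nlinarith
  have hs2 : s < 1/2 := by rw [hsval]; nlinarith
  have hs1 : s < 1 := by linarith
  -- derivative of x ↦ bstar (pbar/x) q
  have Dp : HasDerivAt (fun t : ℝ => pbar / t) (-(pbar / x ^ 2)) x := by
    have := (hasDerivAt_inv hxne).const_mul pbar
    simpa [div_eq_mul_inv, mul_comm, mul_assoc, neg_div] using this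
  have Dg : HasDerivAt (fun t : ℝ => bstar (pbar / t) q)
      (-(pbar / x ^ 2) * (1 - q) + q * (0 - -(pbar / x ^ 2))) x := by
    have h1 : HasDerivAt (fun t : ℝ => pbar / t * (1 - q))
        (-(pbar / x ^ 2) * (1 - q)) x := Dp.mul_const _
    have h2' : HasDerivAt (fun t : ℝ => q * (1 - pbar / t))
        (q * (0 - -(pbar / x ^ 2))) x := ((hasDerivAt_const x (1:ℝ)).sub Dp).const_mul q
    exact h1.add h2'
  set L : ℝ := Real.logb 2 ((1 - s) / s) with hL
  have Dh : HasDerivAt h2 L s := h2_hasDerivAt hs0 hs1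
  have Df : HasDerivAt (fun t : ℝ => t * h2 (bstar (pbar / t) q))
      (1 * h2 s + x * (L * (-(pbar / x ^ 2) * (1 - q) + q * (0 - -(pbar / x ^ 2))))) x :=
    (hasDerivAt_id x).mul (Dh.comp x Dg : HasDerivAt (h2 ∘ fun t : ℝ => bstar (pbar / t) q) _ x)
  have hderiv_eq : 1 * h2 s + x * (L * (-(pbar / x ^ 2) * (1 - q) + q * (0 - -(pbar / x ^ 2))))
      = h2 s + (2 * q - 1) * p * L := by
    rw [hp]; field_simp; ring
  constructor
  · rw [← hderiv_eq]; exact Df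
  · have hLpos : 0 < L := by
      rw [hL]
      apply Real.logb_pos (by norm_num)
      rw [lt_div_iff₀ hs0]; linarith
    have hlog1s : Real.logb 2 (1 - s) < 0 :=
      Real.logb_neg (by norm_num) (by linarith) (by linarith)
    have hsplit : L = Real.logb 2 (1 - s) - Real.logb 2 s := by
      rw [hL, Real.logb_div (by intro h; nlinarith [sub_eq_zero.mp h]) (ne_of_gt hs0)]
    have hh2 : h2 s = s * L - Real.logb 2 (1 - s) := by
      rw [h2, hsplit]; ring
    have hsq : (2 * q - 1) * p = q - s := by rw [hsval]; ring
    rw [hh2, hsq]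
    nlinarith [mul_pos hq0 hLpos]
end

section
/- For every θ with 0 < θ ≤ 4/3, setting S = θ³/8 and η = θ²/4, one has S/θ + h2(1/2 − 3θ/8) < 1 − η; that is, θ²/8 + h2(1/2 − 3θ/8) < 1 − θ²/4. -/
open Real

/-- `log(1+x) - log(1-x) ≥ 2x` on `[0,1)`. -/
lemma aux_log_ratio_ge {t : ℝ} (h0 : 0 ≤ t) (h1 : t < 1) :
    2 * t ≤ Real.log (1 + t) - Real.log (1 - t) := by
  set f : ℝ → ℝ := fun x => Real.log (1 + x) - Real.log (1 - x) - 2 * x with hf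
  have hderiv : ∀ x ∈ Set.Ioo (0:ℝ) 1,
      HasDerivAt f (1 / (1 + x) + 1 / (1 - x) - 2) x := by
    intro x hx
    have hx1 : (1 : ℝ) + x ≠ 0 := by nlinarith [hx.1]
    have hx2 : (1 : ℝ) - x ≠ 0 := by nlinarith [hx.2]
    have d1 : HasDerivAt (fun x : ℝ => Real.log (1 + x)) (1 / (1 + x)) x := by
      have := (((hasDerivAt_id x).const_add 1).log hx1)
      simpa using this
    have d2 : HasDerivAt (fun x : ℝ => Real.log (1 - x)) (-1 / (1 - x)) x := by
      have := (((hasDerivAt_id x).const_sub 1).log hx2)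
      simpa using this
    have d3 : HasDerivAt (fun x : ℝ => 2 * x) 2 x := by
      simpa using (hasDerivAt_id x).const_mul 2
    have := (d1.sub d2).sub d3
    refine this.congr_deriv ?_
    field_simp
    ring
  have hmono : MonotoneOn f (Set.Icc 0 t) := by
    apply monotoneOn_of_deriv_nonneg (convex_Icc 0 t)
    · apply ContinuousOn.sub
      apply ContinuousOn.sub
      · exact ContinuousOn.log (by fun_prop) (fun x hx => by nlinarith [hx.1, hx.2])
      · exact ContinuousOn.log (by fun_prop) (fun x hx => by nlinarith [hx.1, hx.2])
      · fun_prop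
    · intro x hx
      rw [interior_Icc] at hx
      have : x ∈ Set.Ioo (0:ℝ) 1 := ⟨hx.1, lt_of_lt_of_le hx.2 (le_of_lt h1)⟩
      exact (hderiv x this).differentiableAt.differentiableWithinAt
    · intro x hx
      rw [interior_Icc] at hx
      have hx' : x ∈ Set.Ioo (0:ℝ) 1 := ⟨hx.1, lt_of_lt_of_le hx.2 (le_of_lt h1)⟩
      rw [(hderiv x hx').deriv]
      have hx1 : (0:ℝ) < 1 + x := by nlinarith [hx'.1]
      have hx2 : (0:ℝ) < 1 - x := by nlinarith [hx'.2]
      have key : 1 / (1 + x) + 1 / (1 - x) - 2 = 2 * x ^ 2 / ((1 + x) * (1 - x)) := by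
        field_simp; ring
      rw [key]; positivity
  have h00 : f 0 = 0 := by simp [hf]
  have := hmono (Set.mem_Icc.2 ⟨le_refl 0, h0⟩) (Set.mem_Icc.2 ⟨h0, le_refl t⟩) h0
  rw [h00] at this
  simp only [hf] at this
  linarith

/-- `(1+t)log(1+t) + (1-t)log(1-t) ≥ t²` on `[0,1]`. -/
lemma aux_sum_ge_sq {t : ℝ} (h0 : 0 ≤ t) (h1 : t ≤ 1) :
    t ^ 2 ≤ (1 + t) * Real.log (1 + t) + (1 - t) * Real.log (1 - t) := by
  set g : ℝ → ℝ := fun x =>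
    (1 + x) * Real.log (1 + x) + (1 - x) * Real.log (1 - x) - x ^ 2 with hg
  have hcont : Continuous g := by
    apply Continuous.sub
    apply Continuous.add
    · exact Real.continuous_mul_log.comp (continuous_const.add continuous_id)
    · exact Real.continuous_mul_log.comp (continuous_const.sub continuous_id)
    · fun_prop
  have hderiv : ∀ x ∈ Set.Ioo (0:ℝ) 1,
      HasDerivAt g (Real.log (1 + x) - Real.log (1 - x) - 2 * x) x := by
    intro x hx
    have hx1 : (1 : ℝ) + x ≠ 0 := by nlinarith [hx.1]
    have hx2 : (1 : ℝ) - x ≠ 0 := by nlinarith [hx.2]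
    have d1 : HasDerivAt (fun x : ℝ => (1 + x) * Real.log (1 + x))
        (Real.log (1 + x) + 1) x := by
      have a1 : HasDerivAt (fun x : ℝ => (1:ℝ) + x) 1 x := (hasDerivAt_id x).const_add 1
      have a2 : HasDerivAt (fun x : ℝ => Real.log (1 + x)) (1 / (1 + x)) x := by
        simpa using a1.log hx1
      have := a1.mul a2
      refine this.congr_deriv ?_
      field_simp
    have d2 : HasDerivAt (fun x : ℝ => (1 - x) * Real.log (1 - x))
        (-Real.log (1 - x) - 1) x := by
      have a1 : HasDerivAt (fun x : ℝ => (1:ℝ) - x) (-1) x := (hasDerivAt_id x).const_sub 1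
      have a2 : HasDerivAt (fun x : ℝ => Real.log (1 - x)) (-1 / (1 - x)) x := by
        simpa using a1.log hx2
      have := a1.mul a2
      refine this.congr_deriv ?_
      field_simp
      ring
    have d3 : HasDerivAt (fun x : ℝ => x ^ 2) (2 * x) x := by
      simpa using (hasDerivAt_pow 2 x)
    have := (d1.add d2).sub d3
    refine this.congr_deriv ?_
    ring
  have hmono : MonotoneOn g (Set.Icc 0 1) := by
    apply monotoneOn_of_deriv_nonneg (convex_Icc 0 1) hcont.continuousOn
    · intro x hx
      rw [interior_Icc] at hx
      exact (hderiv x hx).differentiableAt.differentiableWithinAt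
    · intro x hx
      rw [interior_Icc] at hx
      rw [(hderiv x hx).deriv]
      have := aux_log_ratio_ge (le_of_lt hx.1) hx.2
      linarith
  have h00 : g 0 = 0 := by simp [hg]
  have := hmono (Set.mem_Icc.2 ⟨le_refl 0, zero_le_one⟩) (Set.mem_Icc.2 ⟨h0, h1⟩) h0
  rw [h00] at this
  simp only [hg] at this
  linarith

/-- For every `θ` with `0 < θ ≤ 4/3`, setting `S = θ³/8` and `η = θ²/4`,
one has `S/θ + h2(1/2 − 3θ/8) < 1 − η`, i.e. `θ²/8 + h2(1/2 − 3θ/8) < 1 − θ²/4`. -/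
theorem theta_entropy_bound :
    ∀ θ : ℝ, 0 < θ → θ ≤ 4/3 →
      (θ^3/8) / θ + h2 (1/2 - 3*θ/8) < 1 - θ^2/4 ∧
      θ^2/8 + h2 (1/2 - 3*θ/8) < 1 - θ^2/4 := by
  intro θ hθ0 hθ1
  have hdiv : (θ^3/8) / θ = θ^2/8 := by
    field_simp
  rw [hdiv, and_self]
  have hlog2pos : (0:ℝ) < Real.log 2 := Real.log_pos (by norm_num)
  have hlog2lt : Real.log 2 < 3/4 :=
    lt_trans Real.log_two_lt_d9 (by norm_num)
  rcases eq_or_lt_of_le hθ1 with heq | hlt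
  · -- θ = 4/3
    rw [heq]
    norm_num [h2]
  · -- θ < 4/3
    set t : ℝ := 3 * θ / 4 with ht
    have ht0 : 0 < t := by positivity
    have ht1 : t < 1 := by rw [ht]; linarith
    have hy : (1:ℝ)/2 - 3*θ/8 = (1 - t)/2 := by rw [ht]; ring
    have h1t : (0:ℝ) < 1 - t := by linarith
    have h1t' : (0:ℝ) < 1 + t := by linarith
    have hS := aux_sum_ge_sq (le_of_lt ht0) (le_of_lt ht1)
    -- rewrite h2 value
    have hval : h2 ((1 - t)/2) =
        1 - ((1 + t) * Real.log (1 + t) + (1 - t) * Real.log (1 - t)) / (2 * Real.log 2) := by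
      have e1 : (1:ℝ) - (1 - t)/2 = (1 + t)/2 := by ring
      rw [h2, e1]
      rw [Real.logb, Real.logb]
      rw [Real.log_div (by linarith) (by norm_num), Real.log_div (by linarith) (by norm_num)]
      field_simp
      ring
    rw [hy, hval]
    have h2l2 : (0:ℝ) < 2 * Real.log 2 := by linarith
    have key : (3 * θ^2 / 8) * (2 * Real.log 2) < t ^ 2 := by
      have ht2 : t ^ 2 = 9 * θ^2 / 16 := by rw [ht]; ring
      rw [ht2]
      nlinarith [mul_pos hθ0 hθ0]
    have hgoal : 3 * θ^2 / 8 <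
        ((1 + t) * Real.log (1 + t) + (1 - t) * Real.log (1 - t)) / (2 * Real.log 2) := by
      rw [lt_div_iff₀ h2l2]
      exact lt_of_lt_of_le key hS
    linarith
end

section
/- Fix q ∈ [0,1/2). There exists a unique p₀ in the open interval (0,1/2) satisfying the equation 4 + (1+2q)·log₂(p₀ ⋆ q) + (3−2q)·log₂(1 − p₀ ⋆ q) = 0. (Note that p = 1/2 also solves this equation, so the assertion is uniqueness of the solution different from 1/2.) -/
open Set Real

lemma aux_hasDerivAt_D {t : ℝ} (ht0 : 0 < t) (ht1 : t < 1) :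
    HasDerivAt (fun s => 2*Real.log s - 2*Real.log (1-s) + 1/s - 1/(1-s))
      (-(2*t-1)^2/(t^2*(1-t)^2)) t := by
  have h1t : (0:ℝ) < 1 - t := by linarith
  have hsub : HasDerivAt (fun s : ℝ => 1 - s) (-1) t := (hasDerivAt_id t).const_sub 1
  have h1 : HasDerivAt Real.log t⁻¹ t := Real.hasDerivAt_log ht0.ne'
  have h2 : HasDerivAt (fun s => Real.log (1-s)) ((1-t)⁻¹ * (-1)) t :=
    (Real.hasDerivAt_log h1t.ne').comp t hsub
  have h3 : HasDerivAt (fun s : ℝ => 1/s) (-(t^2)⁻¹) t := by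
    simpa [one_div] using hasDerivAt_inv ht0.ne'
  have h4 : HasDerivAt (fun s : ℝ => 1/(1-s)) (-((1-t)^2)⁻¹ * (-1)) t := by
    simpa [one_div, Function.comp_def] using (hasDerivAt_inv h1t.ne').comp t hsub
  have := (((h1.const_mul 2).sub (h2.const_mul 2)).add h3).sub h4
  convert this using 1
  case e'_4 => rfl
  case e'_5 => rfl
  case e'_8 => rfl
  field_simp
  ring

lemma aux_D_pos {x : ℝ} (hx0 : 0 < x) (hx2 : x < 1/2) :
    0 < 2*Real.log x - 2*Real.log (1-x) + 1/x - 1/(1-x) := by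
  set D : ℝ → ℝ := fun s => 2*Real.log s - 2*Real.log (1-s) + 1/s - 1/(1-s) with hDdef
  have anti : StrictAntiOn D (Set.Ioc 0 (1/2)) := by
    apply strictAntiOn_of_deriv_neg (convex_Ioc _ _)
    · intro t ht
      exact (aux_hasDerivAt_D ht.1 (by linarith [ht.2])).continuousAt.continuousWithinAt
    · intro t ht
      rw [interior_Ioc] at ht
      rw [(aux_hasDerivAt_D ht.1 (by linarith [ht.2])).deriv]
      have h1t : (0:ℝ) < 1 - t := by linarith [ht.2]
      have h1 : (0:ℝ) < t^2*(1-t)^2 := mul_pos (pow_pos ht.1 2) (pow_pos h1t 2)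
      have h2 : (0:ℝ) < (2*t-1)^2 := by
        have h : 2*t - 1 < 0 := by linarith [ht.2]
        nlinarith
      exact div_neg_of_neg_of_pos (by linarith) h1
  have hlt : D (1/2) < D x :=
    anti ⟨hx0, le_of_lt hx2⟩ ⟨by norm_num, le_refl _⟩ hx2
  have hval : D (1/2) = 0 := by
    simp only [hDdef]
    norm_num
  linarith


lemma aux_hasDerivAt_phi {t : ℝ} (ht0 : 0 < t) (ht1 : t < 1) :
    HasDerivAt (fun s => 4*Real.log 2 + (1+2*s)*Real.log s + (3-2*s)*Real.log (1-s))
      (2*Real.log t - 2*Real.log (1-t) + 1/t - 1/(1-t)) t := by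
  have h1t : (0:ℝ) < 1 - t := by linarith
  have hsub : HasDerivAt (fun s : ℝ => 1 - s) (-1) t := (hasDerivAt_id t).const_sub 1
  have h1 : HasDerivAt Real.log t⁻¹ t := Real.hasDerivAt_log ht0.ne'
  have h2 : HasDerivAt (fun s => Real.log (1-s)) ((1-t)⁻¹ * (-1)) t :=
    (Real.hasDerivAt_log h1t.ne').comp t hsub
  have ha : HasDerivAt (fun s : ℝ => 1 + 2*s) 2 t := by
    simpa using ((hasDerivAt_id t).const_mul 2).const_add 1
  have hb : HasDerivAt (fun s : ℝ => 3 - 2*s) (-2) t := by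
    simpa using ((hasDerivAt_id t).const_mul 2).const_sub 3
  have := ((ha.mul h1).add (hb.mul h2)).const_add (4*Real.log 2)
  convert this using 1
  case e'_4 => rfl
  case e'_5 => rfl
  · ext s; simp only [Pi.add_apply, Pi.mul_apply]; ring
  · field_simp
    ring

lemma aux_phi_neg {x : ℝ} (hx0 : 0 < x) (hx2 : x < 1/2) :
    4*Real.log 2 + (1+2*x)*Real.log x + (3-2*x)*Real.log (1-x) < 0 := by
  set φ : ℝ → ℝ := fun s => 4*Real.log 2 + (1+2*s)*Real.log s + (3-2*s)*Real.log (1-s)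
    with hphidef
  have mono : StrictMonoOn φ (Set.Ioc 0 (1/2)) := by
    apply strictMonoOn_of_deriv_pos (convex_Ioc _ _)
    · intro t ht
      exact (aux_hasDerivAt_phi ht.1 (by linarith [ht.2])).continuousAt.continuousWithinAt
    · intro t ht
      rw [interior_Ioc] at ht
      rw [(aux_hasDerivAt_phi ht.1 (by linarith [ht.2])).deriv]
      exact aux_D_pos ht.1 ht.2
  have hlt : φ x < φ (1/2) :=
    mono ⟨hx0, le_of_lt hx2⟩ ⟨by norm_num, le_refl _⟩ hx2
  have hval : φ (1/2) = 0 := by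
    simp only [hphidef]
    rw [show (1:ℝ) - 1/2 = 1/2 by norm_num, show (1:ℝ)/2 = 2⁻¹ by norm_num,
      Real.log_inv]
    ring
  linarith

/-- For `q ∈ [0,1/2)`, there exists a unique `p₀ ∈ (0,1/2)` with
`4 + (1+2q)·log₂(p₀ ⋆ q) + (3−2q)·log₂(1 − p₀ ⋆ q) = 0`. -/
theorem existsUnique_p0 (q : ℝ) (hq : q ∈ Set.Ico (0 : ℝ) (1/2)) :
    ∃! p₀ : ℝ, p₀ ∈ Set.Ioo (0 : ℝ) (1/2) ∧
      4 + (1 + 2*q) * Real.logb 2 (bstar p₀ q)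
        + (3 - 2*q) * Real.logb 2 (1 - bstar p₀ q) = 0 := by
  obtain ⟨hq0, hq2⟩ := hq
  have hL : (0:ℝ) < Real.log 2 := Real.log_pos (by norm_num)
  set ψ : ℝ → ℝ := fun z => 4*Real.log 2 + (1+2*q)*Real.log z + (3-2*q)*Real.log (1-z)
    with hψdef
  set a : ℝ := (1+2*q)/4 with hadef
  have hqa : q < a := by rw [hadef]; linarith
  have hah : a < 1/2 := by rw [hadef]; linarith
  -- derivative of ψ
  have hderivψ : ∀ z : ℝ, 0 < z → z < 1 →
      HasDerivAt ψ ((1+2*q-4*z)/(z*(1-z))) z := by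
    intro z hz0 hz1
    have h1z : (0:ℝ) < 1 - z := by linarith
    have hsub : HasDerivAt (fun s : ℝ => 1 - s) (-1) z := (hasDerivAt_id z).const_sub 1
    have h1 : HasDerivAt Real.log z⁻¹ z := Real.hasDerivAt_log hz0.ne'
    have h2 : HasDerivAt (fun s => Real.log (1-s)) ((1-z)⁻¹ * (-1)) z :=
      (Real.hasDerivAt_log h1z.ne').comp z hsub
    have := ((h1.const_mul (1+2*q)).add (h2.const_mul (3-2*q))).const_add
      (4*Real.log 2)
    convert this using 1
    case e'_4 => rfl
    case e'_5 => rfl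
    · ext s; simp only [hψdef, Pi.add_apply]; ring
    · field_simp
      ring
  -- strict monotonicity on (q, a]
  have mono : StrictMonoOn ψ (Set.Ioc q a) := by
    apply strictMonoOn_of_deriv_pos (convex_Ioc _ _)
    · intro t ht
      exact (hderivψ t (lt_of_le_of_lt hq0 ht.1)
        (by linarith [ht.2])).continuousAt.continuousWithinAt
    · intro t ht
      rw [interior_Ioc] at ht
      have ht0 : 0 < t := lt_of_le_of_lt hq0 ht.1
      have ht1 : t < 1 := by linarith [ht.2]
      rw [(hderivψ t ht0 ht1).deriv]
      apply div_pos
      · rw [hadef] at ht; linarith [ht.2]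
      · exact mul_pos ht0 (by linarith)
  -- strict antitonicity on [a, 1/2]
  have anti : StrictAntiOn ψ (Set.Icc a (1/2)) := by
    apply strictAntiOn_of_deriv_neg (convex_Icc _ _)
    · intro t ht
      exact (hderivψ t (lt_of_lt_of_le (by linarith) ht.1)
        (by linarith [ht.2])).continuousAt.continuousWithinAt
    · intro t ht
      rw [interior_Icc] at ht
      have ht0 : 0 < t := lt_of_lt_of_le (by linarith) (le_of_lt ht.1)
      have ht1 : t < 1 := by linarith [ht.2]
      rw [(hderivψ t ht0 ht1).deriv]
      apply div_neg_of_neg_of_pos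
      · rw [hadef] at ht; linarith [ht.1]
      · exact mul_pos ht0 (by linarith)
  have ψhalf : ψ (1/2) = 0 := by
    simp only [hψdef]
    rw [show (1:ℝ) - 1/2 = 1/2 by norm_num, show (1:ℝ)/2 = 2⁻¹ by norm_num,
      Real.log_inv]
    ring
  have ψposIco : ∀ z : ℝ, a ≤ z → z < 1/2 → 0 < ψ z := by
    intro z h1 h2
    have := anti ⟨h1, le_of_lt h2⟩ ⟨le_of_lt hah, le_refl _⟩ h2
    linarith [ψhalf ▸ this]
  -- a point where ψ is negative
  obtain ⟨z₁, hz₁neg, hz₁mem⟩ : ∃ z₁, ψ z₁ < 0 ∧ z₁ ∈ Set.Ioo q a := by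
    rcases eq_or_lt_of_le hq0 with h0 | h0
    · refine ⟨1/16, ?_, ?_⟩
      · simp only [hψdef, ← h0]
        rw [show (1:ℝ) - 1/16 = 15/16 by norm_num,
          show (1:ℝ)/16 = (2^4 : ℝ)⁻¹ by norm_num, Real.log_inv, Real.log_pow]
        have h15 : Real.log (15/16) < 0 := Real.log_neg (by norm_num) (by norm_num)
        push_cast
        nlinarith
      · constructor
        · rw [← h0]; norm_num
        · rw [hadef, ← h0]; norm_num
    · have hψq : ψ q < 0 := by
        simp only [hψdef]
        exact aux_phi_neg h0 hq2
      have hcont : ContinuousAt ψ q := by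
        have h1 : ContinuousAt Real.log q := Real.continuousAt_log h0.ne'
        have h2 : ContinuousAt (fun z : ℝ => Real.log (1-z)) q := by
          have : (1:ℝ) - q ≠ 0 := by linarith
          exact (Real.continuousAt_log this).comp (continuousAt_const.sub continuousAt_id)
        exact (continuousAt_const.add (continuousAt_const.mul h1)).add
          (continuousAt_const.mul h2)
      have hev : ∀ᶠ z in nhds q, ψ z < 0 := hcont.eventually_lt continuousAt_const hψq
      have hmem : Set.Ioo q a ∈ nhdsWithin q (Set.Ioi q) :=
        Ioo_mem_nhdsGT_of_mem ⟨le_refl q, hqa⟩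
      exact ((hev.filter_mono nhdsWithin_le_nhds).and
        (Filter.eventually_of_mem hmem (fun z hz => hz))).exists
  have hψa : 0 < ψ a := ψposIco a (le_refl _) hah
  -- IVT: root z₀
  have contOn : ContinuousOn ψ (Set.Icc z₁ a) := by
    intro t ht
    exact (hderivψ t (lt_of_le_of_lt hq0 (lt_of_lt_of_le hz₁mem.1 ht.1))
      (by linarith [ht.2])).continuousAt.continuousWithinAt
  obtain ⟨z₀, hz₀mem, hz₀⟩ := intermediate_value_Ioo (le_of_lt hz₁mem.2) contOn
    (Set.mem_Ioo.2 ⟨hz₁neg, hψa⟩)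
  have hz₀q : q < z₀ := lt_trans hz₁mem.1 hz₀mem.1
  have hz₀h : z₀ < 1/2 := lt_trans hz₀mem.2 hah
  -- uniqueness at z-level
  have zuniq : ∀ z : ℝ, q < z → z < 1/2 → ψ z = 0 → z = z₀ := by
    intro z hz1 hz2 hzz
    have hza : z < a := by
      by_contra h
      push_neg at h
      have := ψposIco z h hz2
      linarith
    exact mono.injOn ⟨hz1, le_of_lt hza⟩ ⟨hz₀q, le_of_lt hz₀mem.2⟩ (by rw [hzz, hz₀])
  -- transfer to p
  have hc : (0:ℝ) < 1 - 2*q := by linarith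
  have hbstar : ∀ p : ℝ, bstar p q = q + p*(1-2*q) := by
    intro p; unfold bstar; ring
  have hkey : ∀ Z : ℝ,
      (4 + (1 + 2*q) * Real.logb 2 Z + (3 - 2*q) * Real.logb 2 (1-Z) = 0) ↔ ψ Z = 0 := by
    intro Z
    have hrw : ψ Z =
        (4 + (1 + 2*q) * Real.logb 2 Z + (3 - 2*q) * Real.logb 2 (1-Z)) * Real.log 2 := by
      simp only [hψdef, Real.logb]
      field_simp
    constructor
    · intro h; rw [hrw, h, zero_mul]
    · intro h
      rw [hrw] at h
      rcases mul_eq_zero.1 h with h' | h'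
      · exact h'
      · exact absurd h' hL.ne'
  refine ⟨(z₀ - q)/(1 - 2*q), ⟨⟨div_pos (by linarith) hc, ?_⟩, ?_⟩, ?_⟩
  · rw [div_lt_iff₀ hc]; linarith
  · have hb0 : bstar ((z₀ - q)/(1 - 2*q)) q = z₀ := by
      rw [hbstar]; field_simp
      rw [mul_div_assoc, div_self (by linarith), mul_one]; ring
    rw [hb0]
    exact (hkey z₀).2 hz₀
  · rintro p ⟨⟨hp0, hp2⟩, heq⟩
    have hZ1 : q < bstar p q := by
      rw [hbstar]; nlinarith
    have hZ2 : bstar p q < 1/2 := by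
      rw [hbstar]; nlinarith
    have hz : bstar p q = z₀ := zuniq _ hZ1 hZ2 ((hkey (bstar p q)).1 heq)
    rw [hbstar] at hz
    rw [eq_div_iff hc.ne']
    linarith
end

section
/- Fix q ∈ [0,1/2) and let p₀ ∈ (0,1/2) be the unique solution in (0,1/2) of 4 + (1+2q)·log₂(p₀ ⋆ q) + (3−2q)·log₂(1 − p₀ ⋆ q) = 0. For every p with 0 ≤ p ≤ p₀ and p < 1/4, the minimum over x ∈ [0,p] of the function f(x) = (1−4p+4x)·(1 − h2((x/(1−4p+4x)) ⋆ q)) equals 1 − h2(p ⋆ q), and it is attained at x = p. -/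
lemma gibbs_aux (a s : ℝ) (ha0 : 0 ≤ a) (ha1 : a ≤ 1) (hs0 : 0 < s) (hs1 : s < 1) :
    a * Real.log s - a * Real.log a + ((1-a) * Real.log (1-s) - (1-a) * Real.log (1-a)) ≤ 0 := by
  rcases eq_or_lt_of_le ha0 with h0 | h0
  · rw [← h0]
    simp
    exact Real.log_nonpos (by linarith) (by linarith)
  rcases eq_or_lt_of_le ha1 with h1 | h1
  · rw [h1]
    simp
    exact Real.log_nonpos hs0.le hs1.le
  · have e1 : Real.log s - Real.log a ≤ s/a - 1 := by
      rw [← Real.log_div hs0.ne' h0.ne']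
      exact Real.log_le_sub_one_of_pos (div_pos hs0 h0)
    have e2 : Real.log (1-s) - Real.log (1-a) ≤ (1-s)/(1-a) - 1 := by
      rw [← Real.log_div (by linarith) (by linarith)]
      exact Real.log_le_sub_one_of_pos (div_pos (by linarith) (by linarith))
    have e3 : a * (s/a - 1) = s - a := by field_simp
    have e4 : (1-a) * ((1-s)/(1-a) - 1) = a - s := by
      rw [mul_sub, mul_div_cancel₀ _ (by linarith : (1:ℝ)-a ≠ 0)]
      ring
    have e5 : a * (Real.log s - Real.log a) ≤ s - a := by
      calc a * (Real.log s - Real.log a) ≤ a * (s/a - 1) :=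
            mul_le_mul_of_nonneg_left e1 h0.le
        _ = s - a := e3
    have e6 : (1-a) * (Real.log (1-s) - Real.log (1-a)) ≤ a - s := by
      calc (1-a) * (Real.log (1-s) - Real.log (1-a)) ≤ (1-a) * ((1-s)/(1-a) - 1) :=
            mul_le_mul_of_nonneg_left e2 (by linarith)
        _ = a - s := e4
    nlinarith [e5, e6]

lemma tangent_line_s9 (a s : ℝ) (ha0 : 0 ≤ a) (ha1 : a ≤ 1) (hs0 : 0 < s) (hs1 : s < 1) :
    h2 a ≤ h2 s + (a - s) * (Real.logb 2 (1-s) - Real.logb 2 s) := by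
  have key := gibbs_aux a s ha0 ha1 hs0 hs1
  have h2a : h2 a = (-(a * Real.log a) - (1-a) * Real.log (1-a)) / Real.log 2 := by
    simp only [h2, Real.logb]; ring
  have hrhs : h2 s + (a - s) * (Real.logb 2 (1-s) - Real.logb 2 s)
      = (-(a * Real.log s) - (1-a) * Real.log (1-s)) / Real.log 2 := by
    simp only [h2, Real.logb]; ring
  rw [h2a, hrhs]
  rw [div_le_div_iff_of_pos_right (Real.log_pos one_lt_two)]
  linarith

lemma psi_deriv (q y : ℝ) (hy0 : 0 < y) (hy1 : y < 1) :
    HasDerivAt (fun y : ℝ => 4 + (1+2*q) * Real.logb 2 y + (3-2*q) * Real.logb 2 (1-y))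
      ((1+2*q-4*y) / (y*(1-y)) / Real.log 2) y := by
  have h1 : HasDerivAt Real.log y⁻¹ y := Real.hasDerivAt_log hy0.ne'
  have h2 : HasDerivAt (fun z : ℝ => Real.log (1-z)) (-(1-y)⁻¹) y := by
    have hb : HasDerivAt (fun z : ℝ => 1 - z) (-1) y := by
      simpa using (hasDerivAt_id y).const_sub 1
    simpa [Function.comp_def] using (Real.hasDerivAt_log (by linarith : (1:ℝ)-y ≠ 0)).comp y hb
  have h3 : HasDerivAt (fun z : ℝ => 4 + (1+2*q) * Real.logb 2 z + (3-2*q) * Real.logb 2 (1-z))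
      ((1+2*q) * (y⁻¹ / Real.log 2) + (3-2*q) * (-(1-y)⁻¹ / Real.log 2)) y := by
    have e : (fun z : ℝ => 4 + (1+2*q) * Real.logb 2 z + (3-2*q) * Real.logb 2 (1-z))
        = fun z : ℝ => 4 + (1+2*q) * (Real.log z / Real.log 2)
            + (3-2*q) * (Real.log (1-z) / Real.log 2) := by
      funext z; simp [Real.logb]
    rw [e]
    exact (((h1.div_const (Real.log 2)).const_mul (1+2*q)).const_add 4).add
      ((h2.div_const (Real.log 2)).const_mul (3-2*q))
  convert h3 using 1
  have hl2 : Real.log 2 ≠ 0 := (Real.log_pos one_lt_two).ne'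
  have hy : y ≠ 0 := hy0.ne'
  have h1y : (1:ℝ) - y ≠ 0 := by linarith
  field_simp
  ring

lemma psi_le (q s s₀ : ℝ) (hq0 : 0 ≤ q) (hq2 : q < 1/2)
    (hs : 0 < s) (hss : s ≤ s₀) (hsm : s < (1+2*q)/4) (hs₀ : s₀ < 1/2)
    (h0 : 4 + (1+2*q) * Real.logb 2 s₀ + (3-2*q) * Real.logb 2 (1-s₀) = 0) :
    4 + (1+2*q) * Real.logb 2 s + (3-2*q) * Real.logb 2 (1-s) ≤ 0 := by
  set ψ : ℝ → ℝ := fun y => 4 + (1+2*q) * Real.logb 2 y + (3-2*q) * Real.logb 2 (1-y) with hψ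
  by_cases hcase : s₀ ≤ (1+2*q)/4
  · -- increasing branch
    rcases eq_or_lt_of_le hss with h | h
    · rw [h]; exact le_of_eq h0
    · have hmono : StrictMonoOn ψ (Set.Icc s s₀) := by
        apply strictMonoOn_of_deriv_pos (convex_Icc s s₀)
        · intro y hy
          have hy0 : 0 < y := lt_of_lt_of_le hs hy.1
          have hy1 : y < 1 := by
            have := hy.2; linarith
          exact (psi_deriv q y hy0 hy1).continuousAt.continuousWithinAt
        · intro y hy
          rw [interior_Icc] at hy
          have hy0 : 0 < y := lt_trans hs hy.1
          have hy1 : y < 1 := by have := hy.2; linarith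
          rw [(psi_deriv q y hy0 hy1).deriv]
          apply div_pos (div_pos (by nlinarith [hy.2] : 0 < 1+2*q-4*y)
            (by nlinarith : (0:ℝ) < y*(1-y))) (Real.log_pos one_lt_two)
      have := hmono ⟨le_refl s, hss⟩ ⟨hss, le_refl s₀⟩ h
      have hz : ψ s₀ = 0 := h0
      have : ψ s < 0 := by rw [← hz]; exact this
      exact this.le
  · -- s₀ on the decreasing branch: contradiction
    exfalso
    push_neg at hcase
    have hanti : StrictAntiOn ψ (Set.Icc s₀ (1/2)) := by
      apply strictAntiOn_of_deriv_neg (convex_Icc s₀ (1/2))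
      · intro y hy
        have hy0 : 0 < y := by have := hy.1; nlinarith
        have hy1 : y < 1 := by have := hy.2; linarith
        exact (psi_deriv q y hy0 hy1).continuousAt.continuousWithinAt
      · intro y hy
        rw [interior_Icc] at hy
        have hy0 : 0 < y := by have := hy.1; nlinarith
        have hy1 : y < 1 := by have := hy.2; linarith
        rw [(psi_deriv q y hy0 hy1).deriv]
        apply div_neg_of_neg_of_pos
        apply div_neg_of_neg_of_pos
        · nlinarith [hy.1]
        · nlinarith
        · exact Real.log_pos one_lt_two
    have hhalf : ψ (1/2) = 0 := by
      have : Real.logb 2 ((1:ℝ)/2) = -1 := by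
        rw [show ((1:ℝ)/2) = 2⁻¹ by norm_num, Real.logb_inv]
        norm_num
      simp only [hψ]
      rw [show (1:ℝ) - 1/2 = 1/2 by norm_num, this]
      ring
    have := hanti ⟨le_refl s₀, hs₀.le⟩ ⟨hs₀.le, le_refl (1/2)⟩ hs₀
    have hz : ψ s₀ = 0 := h0
    rw [hhalf, hz] at this
    exact lt_irrefl 0 this

set_option maxHeartbeats 1000000 in
/-- Fix `q ∈ [0,1/2)` and let `p₀ ∈ (0,1/2)` solve
`4 + (1+2q)·log₂(p₀ ⋆ q) + (3−2q)·log₂(1 − p₀ ⋆ q) = 0`.  For `0 ≤ p ≤ p₀` with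
`p < 1/4`, the minimum over `x ∈ [0,p]` of
`f(x) = (1−4p+4x)·(1 − h2((x/(1−4p+4x)) ⋆ q))` equals `1 − h2(p ⋆ q)` and is
attained at `x = p`. -/
theorem min_on_small_p (q p₀ p : ℝ) (hq : q ∈ Set.Ico (0 : ℝ) (1/2))
    (hp₀ : p₀ ∈ Set.Ioo (0 : ℝ) (1/2))
    (heq : 4 + (1 + 2*q) * Real.logb 2 (bstar p₀ q)
        + (3 - 2*q) * Real.logb 2 (1 - bstar p₀ q) = 0)
    (hp0 : 0 ≤ p) (hpp₀ : p ≤ p₀) (hp14 : p < 1/4) :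
    (∀ x ∈ Set.Icc (0 : ℝ) p,
        1 - h2 (bstar p q)
          ≤ (1 - 4*p + 4*x) * (1 - h2 (bstar (x / (1 - 4*p + 4*x)) q))) ∧
    (1 - 4*p + 4*p) * (1 - h2 (bstar (p / (1 - 4*p + 4*p)) q)) = 1 - h2 (bstar p q) := by
  obtain ⟨hq0, hq2⟩ := hq
  obtain ⟨hp₀0, hp₀2⟩ := hp₀
  constructor
  · intro x hx
    obtain ⟨hx0, hxp⟩ := hx
    by_cases hpz : p = 0
    · have hxz : x = 0 := le_antisymm (hpz ▸ hxp) hx0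
      subst hpz; subst hxz
      norm_num
    · have hpp : 0 < p := lt_of_le_of_ne hp0 (Ne.symm hpz)
      set t : ℝ := 1 - 4*p + 4*x with ht_def
      have ht : 0 < t := by simp only [ht_def]; linarith
      set u : ℝ := x / t with hu_def
      have hu0 : 0 ≤ u := div_nonneg hx0 ht.le
      have hxut : x = u * t := (div_mul_cancel₀ x ht.ne').symm
      have hup : u ≤ p := by
        rw [hu_def, div_le_iff₀ ht]
        nlinarith
      set a : ℝ := bstar u q with ha_def
      set s : ℝ := bstar p q with hs_def
      have hsval : s = p + q - 2*p*q := by rw [hs_def]; unfold bstar; ring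
      have haval : a = u + q - 2*u*q := by rw [ha_def]; unfold bstar; ring
      have hs0 : 0 < s := by nlinarith
      have hs2 : s < 1/2 := by nlinarith
      have ha0 : 0 ≤ a := by nlinarith
      have ha1 : a ≤ 1 := by nlinarith
      have tangent := tangent_line_s9 a s ha0 ha1 hs0 (by linarith)
      -- key inequality ψ(s) ≤ 0
      have hs₀2 : bstar p₀ q < 1/2 := by unfold bstar; nlinarith
      have hss₀ : s ≤ bstar p₀ q := by rw [hsval]; unfold bstar; nlinarith
      have hsm : s < (1+2*q)/4 := by nlinarith
      have key := psi_le q s (bstar p₀ q) hq0 hq2 hs0 hss₀ hsm hs₀2 (by linarith [heq])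
      -- abbreviations
      set L1 : ℝ := Real.logb 2 s with hL1
      set L2 : ℝ := Real.logb 2 (1-s) with hL2
      have hS : h2 s = -(s * L1) - (1-s) * L2 := by
        rw [hL1, hL2]; rfl
      have hut : t * u = x := by rw [hxut]; ring
      have e1 : t * (a - s) = (x - p) * (1-4*p) * (1-2*q) := by
        have d1 : a - s = (u - p) * (1-2*q) := by rw [haval, hsval]; ring
        calc t * (a - s) = (t*u - t*p) * (1-2*q) := by rw [d1]; ring
          _ = (x - t*p) * (1-2*q) := by rw [hut]
          _ = (x - p) * (1-4*p) * (1-2*q) := by rw [ht_def]; ring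
      have tm : t * h2 a ≤ t * (h2 s + (a - s) * (L2 - L1)) :=
        mul_le_mul_of_nonneg_left tangent ht.le
      have e4 : t * (h2 s + (a - s) * (L2 - L1))
          = t * h2 s + (x - p) * (1-4*p) * (1-2*q) * (L2 - L1) := by
        linear_combination (L2 - L1) * e1
      have e2 : t - t * h2 s - (x - p) * (1-4*p) * (1-2*q) * (L2 - L1)
          = (1 - h2 s) + (x - p) * (4 + (1+2*q) * L1 + (3-2*q) * L2) := by
        rw [hS, ht_def, hsval]
        ring
      have e3 : 0 ≤ (x - p) * (4 + (1+2*q) * L1 + (3-2*q) * L2) := by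
        have h := mul_nonneg (by linarith : (0:ℝ) ≤ p - x)
          (by linarith : (0:ℝ) ≤ -(4 + (1+2*q) * L1 + (3-2*q) * L2))
        nlinarith [h]
      calc 1 - h2 s ≤ t - t * h2 s - (x - p) * (1-4*p) * (1-2*q) * (L2 - L1) := by
            rw [e2]; linarith
        _ ≤ t - t * h2 a := by linarith [tm, e4]
        _ = t * (1 - h2 a) := by ring
  · have h1 : 1 - 4*p + 4*p = 1 := by ring
    rw [h1, div_one, one_mul]
end

section
/- Fix q ∈ [0,1/2) and let p₀ ∈ (0,1/2) be the unique solution in (0,1/2) of 4 + (1+2q)·log₂(p₀ ⋆ q) + (3−2q)·log₂(1 − p₀ ⋆ q) = 0, and assume p₀ < 1/4. For every p with p₀ ≤ p ≤ 1/4, the minimum over x ∈ [0,p] of the function f(x) = (1−4p+4x)·(1 − h2((x/(1−4p+4x)) ⋆ q)) (with the convention f(x) = 0 when 1−4p+4x = 0) equals ((1−4p)/(1−4p₀))·(1 − h2(p₀ ⋆ q)), and it is attained at x* = (1−4p)·p₀/(1−4p₀). -/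
lemma h2_def' (y : ℝ) : h2 y = (Real.negMulLog y + Real.negMulLog (1 - y)) / Real.log 2 := by
  simp [h2, Real.negMulLog, Real.logb]; ring

lemma continuous_h2 : Continuous h2 := by
  have : h2 = fun y => (Real.negMulLog y + Real.negMulLog (1 - y)) / Real.log 2 :=
    funext h2_def'
  rw [this]
  exact ((Real.continuous_negMulLog.add
    (Real.continuous_negMulLog.comp (continuous_const.sub continuous_id))).div_const _)

lemma hasDerivAt_h2 {y : ℝ} (h0 : 0 < y) (h1 : y < 1) :
    HasDerivAt h2 ((Real.log (1 - y) - Real.log y) / Real.log 2) y := by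
  have hA : HasDerivAt Real.negMulLog (-Real.log y - 1) y :=
    Real.hasDerivAt_negMulLog (ne_of_gt h0)
  have hB : HasDerivAt (fun z : ℝ => Real.negMulLog (1 - z)) (Real.log (1 - y) + 1) y := by
    have hc : HasDerivAt (fun z : ℝ => 1 - z) (-1) y := by
      simpa using (hasDerivAt_id y).const_sub 1
    have := (Real.hasDerivAt_negMulLog (x := 1 - y) (by linarith)).comp y hc
    exact this.congr_deriv (by ring)
  have hsum := (hA.add hB).div_const (Real.log 2)
  have : h2 = fun y => (Real.negMulLog y + Real.negMulLog (1 - y)) / Real.log 2 :=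
    funext h2_def'
  rw [this]
  exact hsum.congr_deriv (by ring)

set_option maxHeartbeats 1000000 in
lemma key_lemma (q p₀ : ℝ) (hq0 : 0 ≤ q) (hq1 : q < 1/2)
    (hp₀0 : 0 < p₀) (hp₀4 : p₀ < 1/4)
    (heq : 4 + (1 + 2*q) * Real.logb 2 (bstar p₀ q)
        + (3 - 2*q) * Real.logb 2 (1 - bstar p₀ q) = 0) :
    ∀ u ∈ Set.Icc (0:ℝ) (1/4),
      (1 - 4*u) * (1 - h2 (bstar p₀ q)) ≤ (1 - 4*p₀) * (1 - h2 (bstar u q)) := by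
  have hbst : ∀ u : ℝ, bstar u q = u * (1 - 2*q) + q := by intro u; simp [bstar]; ring
  have hlog2 : (0:ℝ) < Real.log 2 := Real.log_pos (by norm_num)
  set A : ℝ := 1 - h2 (bstar p₀ q) with hA
  have hs₀pos : 0 < p₀ * (1 - 2*q) + q := by nlinarith
  have hs₀lt : p₀ * (1 - 2*q) + q < 1/2 := by nlinarith
  -- step 1 : stationarity
  have heq' : 4 * Real.log 2 + (1 + 2*q) * Real.log (p₀ * (1 - 2*q) + q)
      + (3 - 2*q) * Real.log (1 - (p₀ * (1 - 2*q) + q)) = 0 := by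
    rw [hbst p₀, Real.logb, Real.logb] at heq
    field_simp at heq
    linarith
  have hAval : A * Real.log 2 = Real.log 2 + (p₀ * (1 - 2*q) + q) * Real.log (p₀ * (1 - 2*q) + q)
      + (1 - (p₀ * (1 - 2*q) + q)) * Real.log (1 - (p₀ * (1 - 2*q) + q)) := by
    rw [hA, hbst p₀]
    simp only [h2, Real.logb]
    field_simp
    ring
  have step1 : 4 * A * Real.log 2
      = (1 - 4*p₀) * (1 - 2*q) *
        (Real.log (1 - (p₀ * (1 - 2*q) + q)) - Real.log (p₀ * (1 - 2*q) + q)) := by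
    linear_combination 4 * hAval + heq'
  -- the function F
  set F : ℝ → ℝ := fun u => (1 - 4*p₀) * (1 - h2 (bstar u q)) - (1 - 4*u) * A with hF
  have hFp₀ : F p₀ = 0 := by simp only [hF]; rw [hA]; ring
  have hFcont : Continuous F := by
    have hcb : Continuous fun u : ℝ => bstar u q := by
      simp only [hbst]
      exact (continuous_id.mul continuous_const).add continuous_const
    exact (continuous_const.mul (continuous_const.sub (continuous_h2.comp hcb))).sub
      ((continuous_const.sub (continuous_const.mul continuous_id)).mul continuous_const)
  have hFderiv : ∀ u ∈ Set.Ioo (0:ℝ) (1/4), HasDerivAt F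
      (4*A - (1 - 4*p₀) * (1 - 2*q) *
        ((Real.log (1 - (u * (1 - 2*q) + q)) - Real.log (u * (1 - 2*q) + q)) / Real.log 2)) u := by
    intro u hu
    obtain ⟨hu0, hu4⟩ := hu
    have hspos : 0 < u * (1 - 2*q) + q := by nlinarith
    have hslt : u * (1 - 2*q) + q < 1/2 := by nlinarith
    have hb : HasDerivAt (fun u : ℝ => bstar u q) (1 - 2*q) u := by
      have h' : HasDerivAt (fun u : ℝ => u * (1 - 2*q) + q) (1 - 2*q) u := by
        simpa using ((hasDerivAt_id u).mul_const (1 - 2*q)).add_const q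
      simpa only [hbst] using h'
    have hh := (hasDerivAt_h2 (y := bstar u q) (by rw [hbst]; exact hspos)
      (by rw [hbst]; linarith)).comp u hb
    have h1 : HasDerivAt (fun u : ℝ => (1 - 4*p₀) * (1 - h2 (bstar u q)))
        ((1 - 4*p₀) * (0 - ((Real.log (1 - bstar u q) - Real.log (bstar u q)) / Real.log 2 * (1 - 2*q)))) u :=
      ((hasDerivAt_const u (1:ℝ)).sub hh).const_mul _
    have h2' : HasDerivAt (fun u : ℝ => (1 - 4*u) * A) (-4 * A) u := by
      simpa using (((hasDerivAt_id u).const_mul (4:ℝ)).const_sub 1).mul_const A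
    have hgoal := h1.sub h2'
    exact hgoal.congr_deriv (by rw [hbst u]; ring)
  -- monotone on the right of p₀
  have hmono : MonotoneOn F (Set.Icc p₀ (1/4)) := by
    apply monotoneOn_of_deriv_nonneg (convex_Icc _ _) hFcont.continuousOn
    · intro u hu
      rw [interior_Icc] at hu
      exact ((hFderiv u ⟨lt_trans hp₀0 hu.1, hu.2⟩).differentiableAt).differentiableWithinAt
    · intro u hu
      rw [interior_Icc] at hu
      have hu' : u ∈ Set.Ioo (0:ℝ) (1/4) := ⟨lt_trans hp₀0 hu.1, hu.2⟩
      rw [(hFderiv u hu').deriv]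
      have hspos : 0 < u * (1 - 2*q) + q := by nlinarith [hu'.1]
      have hslt : u * (1 - 2*q) + q < 1/2 := by nlinarith [hu'.2]
      have hss₀ : p₀ * (1 - 2*q) + q < u * (1 - 2*q) + q := by nlinarith [hu.1]
      have hl1 : Real.log (p₀ * (1 - 2*q) + q) < Real.log (u * (1 - 2*q) + q) :=
        Real.log_lt_log hs₀pos hss₀
      have hl2 : Real.log (1 - (u * (1 - 2*q) + q)) < Real.log (1 - (p₀ * (1 - 2*q) + q)) :=
        Real.log_lt_log (by linarith) (by linarith)
      have hcoef : 0 ≤ (1 - 4*p₀) * (1 - 2*q) := by nlinarith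
      have hkey : (1 - 4*p₀) * (1 - 2*q) *
          ((Real.log (1 - (u * (1 - 2*q) + q)) - Real.log (u * (1 - 2*q) + q)) / Real.log 2)
          ≤ 4 * A := by
        rw [← mul_div_assoc, div_le_iff₀ hlog2]
        calc (1 - 4*p₀) * (1 - 2*q) *
              (Real.log (1 - (u * (1 - 2*q) + q)) - Real.log (u * (1 - 2*q) + q))
            ≤ (1 - 4*p₀) * (1 - 2*q) *
              (Real.log (1 - (p₀ * (1 - 2*q) + q)) - Real.log (p₀ * (1 - 2*q) + q)) :=
              mul_le_mul_of_nonneg_left (by linarith) hcoef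
          _ = 4 * A * Real.log 2 := step1.symm
      linarith
  -- antitone on the left of p₀
  have hanti : AntitoneOn F (Set.Icc (0:ℝ) p₀) := by
    apply antitoneOn_of_deriv_nonpos (convex_Icc _ _) hFcont.continuousOn
    · intro u hu
      rw [interior_Icc] at hu
      exact ((hFderiv u ⟨hu.1, lt_trans hu.2 hp₀4⟩).differentiableAt).differentiableWithinAt
    · intro u hu
      rw [interior_Icc] at hu
      have hu' : u ∈ Set.Ioo (0:ℝ) (1/4) := ⟨hu.1, lt_trans hu.2 hp₀4⟩
      rw [(hFderiv u hu').deriv]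
      have hspos : 0 < u * (1 - 2*q) + q := by nlinarith [hu'.1]
      have hss₀ : u * (1 - 2*q) + q < p₀ * (1 - 2*q) + q := by nlinarith [hu.2]
      have hl1 : Real.log (u * (1 - 2*q) + q) < Real.log (p₀ * (1 - 2*q) + q) :=
        Real.log_lt_log hspos hss₀
      have hl2 : Real.log (1 - (p₀ * (1 - 2*q) + q)) < Real.log (1 - (u * (1 - 2*q) + q)) :=
        Real.log_lt_log (by linarith) (by linarith)
      have hcoef : 0 ≤ (1 - 4*p₀) * (1 - 2*q) := by nlinarith
      have hkey : 4 * A ≤ (1 - 4*p₀) * (1 - 2*q) *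
          ((Real.log (1 - (u * (1 - 2*q) + q)) - Real.log (u * (1 - 2*q) + q)) / Real.log 2) := by
        rw [← mul_div_assoc, le_div_iff₀ hlog2]
        calc 4 * A * Real.log 2
            = (1 - 4*p₀) * (1 - 2*q) *
              (Real.log (1 - (p₀ * (1 - 2*q) + q)) - Real.log (p₀ * (1 - 2*q) + q)) := step1
          _ ≤ (1 - 4*p₀) * (1 - 2*q) *
              (Real.log (1 - (u * (1 - 2*q) + q)) - Real.log (u * (1 - 2*q) + q)) :=
              mul_le_mul_of_nonneg_left (by linarith) hcoef
      linarith
  intro u hu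
  have hFu : 0 ≤ F u := by
    rcases le_total u p₀ with h | h
    · have := hanti ⟨hu.1, h⟩ ⟨hp₀0.le, le_refl _⟩ h
      rw [hFp₀] at this; linarith
    · have := hmono ⟨le_refl _, hp₀4.le⟩ ⟨h, hu.2⟩ h
      rw [hFp₀] at this; linarith
  simp only [hF] at hFu
  linarith


/-- Fix `q ∈ [0,1/2)`, let `p₀ ∈ (0,1/2)` solve
`4 + (1+2q)·log₂(p₀ ⋆ q) + (3−2q)·log₂(1 − p₀ ⋆ q) = 0`, and assume `p₀ < 1/4`.
For every `p` with `p₀ ≤ p ≤ 1/4`, the minimum over `x ∈ [0,p]` of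
`f(x) = (1−4p+4x)·(1 − h2((x/(1−4p+4x)) ⋆ q))` (with `f(x) = 0` when
`1−4p+4x = 0`, which holds automatically since division by zero is zero in Lean
and the prefactor vanishes) equals `((1−4p)/(1−4p₀))·(1 − h2(p₀ ⋆ q))`, attained
at `x* = (1−4p)·p₀/(1−4p₀)`. -/
theorem min_on_large_p (q p₀ p : ℝ) (hq : q ∈ Set.Ico (0 : ℝ) (1/2))
    (hp₀ : p₀ ∈ Set.Ioo (0 : ℝ) (1/2))
    (heq : 4 + (1 + 2*q) * Real.logb 2 (bstar p₀ q)
        + (3 - 2*q) * Real.logb 2 (1 - bstar p₀ q) = 0)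
    (hp₀4 : p₀ < 1/4) (hp1 : p₀ ≤ p) (hp2 : p ≤ 1/4) :
    (∀ x ∈ Set.Icc (0 : ℝ) p,
        ((1 - 4*p) / (1 - 4*p₀)) * (1 - h2 (bstar p₀ q))
          ≤ (1 - 4*p + 4*x) * (1 - h2 (bstar (x / (1 - 4*p + 4*x)) q))) ∧
    (1 - 4*p) * p₀ / (1 - 4*p₀) ∈ Set.Icc (0 : ℝ) p ∧
    (1 - 4*p + 4*((1 - 4*p) * p₀ / (1 - 4*p₀))) *
        (1 - h2 (bstar ((1 - 4*p) * p₀ / (1 - 4*p₀)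
            / (1 - 4*p + 4*((1 - 4*p) * p₀ / (1 - 4*p₀)))) q))
      = ((1 - 4*p) / (1 - 4*p₀)) * (1 - h2 (bstar p₀ q)) := by
  obtain ⟨hq0, hq1⟩ := hq
  obtain ⟨hp₀0, hp₀half⟩ := hp₀
  have hp₀4' : (0:ℝ) < 1 - 4*p₀ := by linarith
  have hc0 : (0:ℝ) ≤ 1 - 4*p := by linarith
  have key := key_lemma q p₀ hq0 hq1 hp₀0 hp₀4 heq
  refine ⟨?_, ⟨?_, ?_⟩, ?_⟩
  · -- the inequality
    intro x hx
    obtain ⟨hx0, hxp⟩ := hx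
    rcases eq_or_lt_of_le (show (0:ℝ) ≤ 1 - 4*p + 4*x by linarith) with ht | ht
    · -- degenerate: 1-4p+4x = 0 forces p = 1/4, x = 0
      have hc : 1 - 4*p = 0 := by linarith
      have hx' : x = 0 := by linarith
      rw [hc, hx']
      norm_num
    · set t : ℝ := 1 - 4*p + 4*x with hT
      have hu0 : 0 ≤ x / t := div_nonneg hx0 ht.le
      have hu4 : x / t ≤ 1/4 := by
        rw [div_le_iff₀ ht]; linarith
      have hk := key (x/t) ⟨hu0, hu4⟩
      have h14u : 1 - 4*(x/t) = (1 - 4*p) / t := by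
        field_simp
        rw [hT]; ring
      rw [h14u] at hk
      -- hk : (1-4p)/t * (1 - h2 s₀) ≤ (1-4p₀) * (1 - h2 (bstar (x/t) q))
      rw [div_mul_eq_mul_div, div_le_iff₀ ht] at hk
      rw [div_mul_eq_mul_div, div_le_iff₀ hp₀4']
      nlinarith [hk]
  · positivity
  · rw [div_le_iff₀ hp₀4']
    nlinarith
  · -- equality at the minimizer
    rcases eq_or_lt_of_le hc0 with hc | hc
    · rw [← hc]
      simp
    · have harg1 : 1 - 4*p + 4*((1 - 4*p) * p₀ / (1 - 4*p₀)) = (1 - 4*p) / (1 - 4*p₀) := by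
        field_simp
        ring
      have harg2 : (1 - 4*p) * p₀ / (1 - 4*p₀) / ((1 - 4*p) / (1 - 4*p₀)) = p₀ := by
        rw [div_div_div_eq]
        field_simp
      rw [harg1, harg2]
end

section
/- Fix q ∈ [0,1/2) and suppose p₀ ∈ (0,1/4) satisfies 4 + (1+2q)·log₂(p₀ ⋆ q) + (3−2q)·log₂(1 − p₀ ⋆ q) = 0. Then the line L(p) = ((1−4p)/(1−4p₀))·(1 − h2(p₀ ⋆ q)) is tangent to the curve g(p) = 1 − h2(p ⋆ q) at p = p₀; that is, L(p₀) = g(p₀) and L'(p₀) = g'(p₀). Equivalently, (1−2q)·log₂((1 − p₀ ⋆ q)/(p₀ ⋆ q)) = 4·(1 − h2(p₀ ⋆ q))/(1 − 4p₀). Moreover, L intersects the p-axis at p = 1/4. -/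
/-- Fix `q ∈ [0,1/2)` and suppose `p₀ ∈ (0,1/4)` satisfies
`4 + (1+2q)·log₂(p₀ ⋆ q) + (3−2q)·log₂(1 − p₀ ⋆ q) = 0`.  Then the line
`L(p) = ((1−4p)/(1−4p₀))·(1 − h2(p₀ ⋆ q))` is tangent to `g(p) = 1 − h2(p ⋆ q)`
at `p = p₀`: `L(p₀) = g(p₀)` and `L'(p₀) = g'(p₀)`; equivalently
`(1−2q)·log₂((1 − p₀ ⋆ q)/(p₀ ⋆ q)) = 4·(1 − h2(p₀ ⋆ q))/(1 − 4p₀)`.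
Moreover `L(1/4) = 0`. -/
theorem tangent_line (q p₀ : ℝ) (hq : q ∈ Set.Ico (0 : ℝ) (1/2))
    (hp₀ : p₀ ∈ Set.Ioo (0 : ℝ) (1/4))
    (heq : 4 + (1 + 2*q) * Real.logb 2 (bstar p₀ q)
        + (3 - 2*q) * Real.logb 2 (1 - bstar p₀ q) = 0) :
    ((1 - 4*p₀) / (1 - 4*p₀)) * (1 - h2 (bstar p₀ q)) = 1 - h2 (bstar p₀ q) ∧
    HasDerivAt (fun p : ℝ => ((1 - 4*p) / (1 - 4*p₀)) * (1 - h2 (bstar p₀ q)))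
      (-(4 * (1 - h2 (bstar p₀ q)) / (1 - 4*p₀))) p₀ ∧
    HasDerivAt (fun p : ℝ => 1 - h2 (bstar p q))
      (-(4 * (1 - h2 (bstar p₀ q)) / (1 - 4*p₀))) p₀ ∧
    (1 - 2*q) * Real.logb 2 ((1 - bstar p₀ q) / bstar p₀ q)
      = 4 * (1 - h2 (bstar p₀ q)) / (1 - 4*p₀) ∧
    ((1 - 4*(1/4 : ℝ)) / (1 - 4*p₀)) * (1 - h2 (bstar p₀ q)) = 0 := by
  obtain ⟨hq0, hq2⟩ := hq
  obtain ⟨hp0, hp4⟩ := hp₀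
  have h4 : (1 : ℝ) - 4*p₀ ≠ 0 := by intro h; nlinarith
  set t := bstar p₀ q with htdef
  have ht : t = p₀ + q - 2*p₀*q := by rw [htdef]; unfold bstar; ring
  have ht0 : 0 < t := by nlinarith
  have ht1 : t < 1/2 := by nlinarith
  have h1t : 0 < 1 - t := by linarith
  have hl2 : Real.log 2 ≠ 0 := ne_of_gt (Real.log_pos one_lt_two)
  have key : (1 - 2*q) * (Real.logb 2 (1-t) - Real.logb 2 t)
      = 4 * (1 - h2 t) / (1 - 4*p₀) := by
    rw [eq_div_iff h4]
    have hh : h2 t = -(t * Real.logb 2 t) - (1-t) * Real.logb 2 (1-t) := rfl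
    rw [hh]
    linear_combination -heq + 4*(Real.logb 2 (1-t) - Real.logb 2 t)*ht
  refine ⟨by rw [div_self h4, one_mul], ?_, ?_, ?_, by norm_num⟩
  · have hlin : HasDerivAt (fun p : ℝ => 1 - 4*p) (-4) p₀ := by
      simpa using ((hasDerivAt_id p₀).const_mul (4:ℝ)).const_sub 1
    have h' := (hlin.div_const (1 - 4*p₀)).mul_const (1 - h2 t)
    exact h'.congr_deriv (by ring)
  · have hmul : HasDerivAt (fun y : ℝ => y * Real.log y) (Real.log t + 1) t :=
      Real.hasDerivAt_mul_log ht0.ne'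
    have hinner : HasDerivAt (fun y : ℝ => 1 - y) (-1) t := by
      simpa using (hasDerivAt_id t).const_sub 1
    have hmul1 : HasDerivAt (fun y : ℝ => (1-y) * Real.log (1-y))
        (-(Real.log (1-t) + 1)) t := by
      have := (Real.hasDerivAt_mul_log h1t.ne').comp t hinner
      exact this.congr_deriv (by ring)
    have hfun : h2 = fun y => (-(y * Real.log y) - (1-y) * Real.log (1-y)) / Real.log 2 := by
      funext y; unfold h2 Real.logb; ring
    have hh2 : HasDerivAt h2 ((Real.log (1-t) - Real.log t) / Real.log 2) t := by
      rw [hfun]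
      have := (hmul.neg.sub hmul1).div_const (Real.log 2)
      exact this.congr_deriv (by ring)
    have hbfun : (fun p : ℝ => bstar p q) = fun p => (1 - 2*q)*p + q := by
      funext p; unfold bstar; ring
    have hb : HasDerivAt (fun p : ℝ => bstar p q) (1 - 2*q) p₀ := by
      rw [hbfun]
      simpa using ((hasDerivAt_id p₀).const_mul (1-2*q)).add_const q
    have hg := hh2.comp p₀ hb
    have hg' := hg.const_sub 1
    refine hg'.congr_deriv (Eq.symm ?_)
    simp only [Real.logb] at key
    field_simp at key ⊢
    linear_combination key
  · rw [Real.logb_div (by linarith) ht0.ne']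
    exact key
end
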